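/- With the double q-Pochhammer symbol interpreted as a formal power series, (q₁^{-2}z; q₁, q₂q₁^{-1})_∞ · (q₂^{-2}z; q₁q₂^{-1}, q₂)_∞ = (z; q₁, q₂q₁^{-1})_∞ · (z; q₁q₂^{-1}, q₂)_∞ / (1 − q₁^{-1}q₂^{-1}z). -/

import Mathlib

open scoped BigOperators

noncomputable def dPochCoeff {K : Type*} [Field K] (p q : K) : ℕ → K
  | 0 => 1
  | n + 1 => (-(n + 1 : K)⁻¹) *
      ∑ j ∈ (Finset.range (n + 1)).attach,
        dPochCoeff p q j.1 *
          ((1 - p ^ (n + 1 - j.1)) * (1 - q ^ (n + 1 - j.1)))⁻¹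
  termination_by n => n
  decreasing_by exact Finset.mem_range.mp j.2

noncomputable def dPoch {K : Type*} [Field K] (p q : K) : PowerSeries K :=
  PowerSeries.mk (dPochCoeff p q)

abbrev RatFunc2 : Type := FractionRing (MvPolynomial (Fin 2) ℚ)

noncomputable def qv1 : RatFunc2 :=
  algebraMap (MvPolynomial (Fin 2) ℚ) RatFunc2 (MvPolynomial.X 0)

noncomputable def qv2 : RatFunc2 :=
  algebraMap (MvPolynomial (Fin 2) ℚ) RatFunc2 (MvPolynomial.X 1)

namespace DPochAux

open PowerSeries

variable {K : Type*} [Field K] [CharZero K]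

/-- The "logarithmic derivative series" of `dPoch p q`. -/
noncomputable def G (p q : K) : PowerSeries K :=
  PowerSeries.mk fun n => if n = 0 then 0 else -(((1 - p ^ n) * (1 - q ^ n))⁻¹)

theorem dPochCoeff_succ (p q : K) (n : ℕ) :
    dPochCoeff p q (n + 1) = (-(n + 1 : K)⁻¹) *
      ∑ j ∈ Finset.range (n + 1),
        dPochCoeff p q j * ((1 - p ^ (n + 1 - j)) * (1 - q ^ (n + 1 - j)))⁻¹ := by
  rw [dPochCoeff, Finset.sum_attach (Finset.range (n + 1))
    (fun j => dPochCoeff p q j * ((1 - p ^ (n + 1 - j)) * (1 - q ^ (n + 1 - j)))⁻¹)]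

/-- Functional equation: `X·F' = F·G`. -/
theorem key (p q : K) :
    X * d⁄dX K (dPoch p q) = dPoch p q * G p q := by
  ext n
  cases n with
  | zero =>
    rw [coeff_zero_X_mul, coeff_zero_eq_constantCoeff, map_mul]
    have : constantCoeff (G p q) = 0 := by simp [G]
    rw [this, mul_zero]
  | succ n =>
    rw [coeff_succ_X_mul, coeff_derivative, coeff_mul,
      Finset.Nat.sum_antidiagonal_eq_sum_range_succ_mk]
    have h0 : ∀ j ∈ Finset.range (n + 2), (coeff j) (dPoch p q) *
        (coeff (n + 1 - j)) (G p q) =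
        if j = n + 1 then 0 else
          dPochCoeff p q j * (-(((1 - p ^ (n + 1 - j)) * (1 - q ^ (n + 1 - j)))⁻¹)) := by
      intro j hj
      have hj' := Finset.mem_range.mp hj
      rw [dPoch, G, coeff_mk, coeff_mk]
      rcases eq_or_ne j (n + 1) with rfl | hne
      · simp
      · rw [if_neg hne, if_neg (by omega)]
    rw [Finset.sum_congr rfl h0, Finset.sum_range_succ, if_pos rfl, add_zero,
      Finset.sum_congr rfl (fun x hx => if_neg (by have := Finset.mem_range.mp hx; omega))]
    simp only [dPoch, coeff_mk]
    rw [dPochCoeff_succ]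
    have hn : ((n : K) + 1) ≠ 0 := Nat.cast_add_one_ne_zero (R := K) n
    rw [neg_mul, neg_mul, neg_eq_iff_eq_neg, ← Finset.sum_neg_distrib]
    simp only [mul_neg, neg_neg]
    rw [mul_comm ((n : K) + 1)⁻¹, mul_assoc, inv_mul_cancel₀ hn, mul_one]

/-- `X·d⁄dX` commutes with rescale. -/
theorem rescale_logD (a : K) (f : K⟦X⟧) :
    X * d⁄dX K (rescale a f) = rescale a (X * d⁄dX K f) := by
  ext n
  cases n with
  | zero => simp [coeff_zero_X_mul, coeff_rescale]
  | succ n =>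
    rw [coeff_succ_X_mul, coeff_derivative, coeff_rescale, coeff_rescale,
      coeff_succ_X_mul, coeff_derivative]
    ring

/-- The log-derivative series of the linear factor `1 - C u X`. -/
noncomputable def Gm (u : K) : PowerSeries K :=
  PowerSeries.mk fun n => if n = 0 then 0 else -(u ^ n)

theorem key_linear (u : K) :
    X * d⁄dX K (1 - C u * X) = (1 - C u * X) * Gm u := by
  have hd : d⁄dX K (1 - C u * X) = - C u := by
    rw [map_sub]
    simp [Derivation.leibniz, smul_eq_mul]
  rw [hd]
  ext n
  rw [sub_mul, one_mul]
  cases n with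
  | zero => simp [coeff_zero_X_mul, Gm]
  | succ n =>
    rw [coeff_succ_X_mul, map_sub, mul_comm (C u) X, mul_assoc, coeff_succ_X_mul]
    cases n with
    | zero => simp [Gm]
    | succ n =>
      simp only [Gm, coeff_mk, coeff_C_mul, Nat.succ_ne_zero, if_neg, mul_neg]
      simp [pow_succ, mul_comm]

theorem mul_logD {f g gf gg : K⟦X⟧} (hf : X * d⁄dX K f = f * gf)
    (hg : X * d⁄dX K g = g * gg) :
    X * d⁄dX K (f * g) = f * g * (gf + gg) := by
  have hleib : d⁄dX K (f * g) = d⁄dX K f * g + f * d⁄dX K g := by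
    rw [Derivation.leibniz]; simp [smul_eq_mul]; ring
  rw [hleib, mul_add]
  calc X * (d⁄dX K f * g) + X * (f * d⁄dX K g)
      = (X * d⁄dX K f) * g + f * (X * d⁄dX K g) := by ring
    _ = f * gf * g + f * (g * gg) := by rw [hf, hg]
    _ = f * g * (gf + gg) := by ring

/-- Uniqueness from equal logarithmic derivatives and equal nonzero constant terms. -/
theorem ext_of_logDeriv (f g : K⟦X⟧) (h0 : constantCoeff f = constantCoeff g)
    (hg : constantCoeff g ≠ 0)
    (h : d⁄dX K f * g = d⁄dX K g * f) : f = g := by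
  ext n
  induction n using Nat.strong_induction_on with
  | _ n ih =>
    cases n with
    | zero => simpa [coeff_zero_eq_constantCoeff] using h0
    | succ n =>
      have hc := congrArg (coeff n) h
      rw [coeff_mul, coeff_mul, Finset.Nat.sum_antidiagonal_eq_sum_range_succ_mk,
        Finset.Nat.sum_antidiagonal_eq_sum_range_succ_mk, Finset.sum_range_succ,
        Finset.sum_range_succ] at hc
      simp only [coeff_derivative] at hc
      have hsum : ∀ j ∈ Finset.range n,
          coeff (j+1) f * ((j : K)+1) * coeff (n-j) g
            = coeff (j+1) g * ((j : K)+1) * coeff (n-j) f := by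
        intro j hj
        have hj' := Finset.mem_range.mp hj
        rw [ih (j+1) (by omega), ih (n-j) (by omega)]
      rw [Finset.sum_congr rfl hsum] at hc
      have hc2 := add_left_cancel hc
      rw [Nat.sub_self, coeff_zero_eq_constantCoeff, h0] at hc2
      have hn : ((n : K) + 1) ≠ 0 := Nat.cast_add_one_ne_zero (R := K) n
      exact mul_right_cancel₀ hn (mul_right_cancel₀ hg hc2)

omit [CharZero K] in
/-- The field identity behind the shift. -/
theorem field_id {a b : K} (ha : a ≠ 0) (hb : b ≠ 0) (ha1 : 1 - a ≠ 0) (hb1 : 1 - b ≠ 0)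
    (hab' : a - b ≠ 0) :
    a⁻¹ ^ 2 * -(((1 - a) * (1 - b * a⁻¹))⁻¹) + b⁻¹ ^ 2 * -(((1 - a * b⁻¹) * (1 - b))⁻¹)
      + -(a⁻¹ * b⁻¹) =
    -(((1 - a) * (1 - b * a⁻¹))⁻¹) + -(((1 - a * b⁻¹) * (1 - b))⁻¹) := by
  have h1 : a * a⁻¹ = 1 := mul_inv_cancel₀ ha
  have h2 : b * b⁻¹ = 1 := mul_inv_cancel₀ hb
  have h3 : (1 - a) * (1 - a)⁻¹ = 1 := mul_inv_cancel₀ ha1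
  have h4 : (a - b) * (a - b)⁻¹ = 1 := mul_inv_cancel₀ hab'
  have h5 : (1 - b) * (1 - b)⁻¹ = 1 := mul_inv_cancel₀ hb1
  have e1 : 1 - b * a⁻¹ = (a - b) * a⁻¹ := by rw [sub_mul, mul_inv_cancel₀ ha]
  have e2 : 1 - a * b⁻¹ = -((a - b) * b⁻¹) := by rw [show -((a - b) * b⁻¹) = (b - a) * b⁻¹ by ring, sub_mul, mul_inv_cancel₀ hb]
  have hA : ((1 - a) * (1 - b * a⁻¹))⁻¹ = a * (1 - a)⁻¹ * (a - b)⁻¹ := by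
    rw [e1, mul_inv, mul_inv, inv_inv]; ring
  have hB : ((1 - a * b⁻¹) * (1 - b))⁻¹ = -(b * (a - b)⁻¹ * (1 - b)⁻¹) := by
    rw [e2, neg_mul, inv_neg, mul_inv, mul_inv, inv_inv]; ring
  rw [hA, hB]
  have hD : (a^2*b^2*(1-a)*(a-b)*(1-b)) ≠ 0 := by
    apply mul_ne_zero; apply mul_ne_zero; apply mul_ne_zero; apply mul_ne_zero
    exact pow_ne_zero _ ha
    exact pow_ne_zero _ hb
    all_goals assumption
  apply mul_left_cancel₀ hD
  linear_combination ((1 : K)*a*b^3*(1-a)⁻¹*(a-b)⁻¹ + (1 : K)*a*b^3*b⁻¹ + (-1 : K)*a*b^4*(1-a)⁻¹*(a-b)⁻¹ + (-1 : K)*a*b^4*b⁻¹ + (-1 : K)*a^2*b^2*(1-a)⁻¹*(a-b)⁻¹ + (-1 : K)*a^2*b^2*b⁻¹ + (1 : K)*a^2*b^3*a⁻¹*(1-a)⁻¹*(a-b)⁻¹ + (1 : K)*a^2*b^4*(1-a)⁻¹*(a-b)⁻¹ + (1 : K)*a^2*b^4*b⁻¹ + (-1 : K)*a^2*b^4*a⁻¹*(1-a)⁻¹*(a-b)⁻¹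 + (1 : K)*a^3*b^2*(1-a)⁻¹*(a-b)⁻¹ + (1 : K)*a^3*b^2*b⁻¹ + (-1 : K)*a^3*b^2*a⁻¹*(1-a)⁻¹*(a-b)⁻¹ + (-1 : K)*a^3*b^3*(1-a)⁻¹*(a-b)⁻¹ + (-1 : K)*a^3*b^3*b⁻¹ + (1 : K)*a^3*b^4*a⁻¹*(1-a)⁻¹*(a-b)⁻¹ + (1 : K)*a^4*b^2*a⁻¹*(1-a)⁻¹*(a-b)⁻¹ + (-1 : K)*a^4*b^3*a⁻¹*(1-a)⁻¹*(a-b)⁻¹) * h1 + ((1 : K)*a*b^2 + (-1 : K)*a*b^3 + (-1 : K)*a^2*b + (-1 : K)*a^2*b^2*(a-b)⁻¹*(1-b)⁻¹ + (1 : K)*a^2*b^3 + (1 : K)*a^2*b^3*(a-b)⁻¹*(1-b)⁻¹ + (-1 : K)*a^2*b^3*b⁻¹*(a-b)⁻¹*(1-b)⁻¹ + (1 : K)*a^2*b^4*b⁻¹*(a-b)⁻¹*(1-b)⁻¹ + (1 : K)*a^3*b + (1 : K)*a^3*b*(a-b)⁻¹*(1-b)⁻¹ + (-1 : K)*a^3*b^2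 + (1 : K)*a^3*b^2*b⁻¹*(a-b)⁻¹*(1-b)⁻¹ + (-1 : K)*a^3*b^3*(a-b)⁻¹*(1-b)⁻¹ + (-1 : K)*a^3*b^4*b⁻¹*(a-b)⁻¹*(1-b)⁻¹ + (-1 : K)*a^4*b*(a-b)⁻¹*(1-b)⁻¹ + (1 : K)*a^4*b^2*(a-b)⁻¹*(1-b)⁻¹ + (-1 : K)*a^4*b^2*b⁻¹*(a-b)⁻¹*(1-b)⁻¹ + (1 : K)*a^4*b^3*b⁻¹*(a-b)⁻¹*(1-b)⁻¹) * h2 + ((1 : K)*a*b^3*(a-b)⁻¹ + (-1 : K)*a*b^4*(a-b)⁻¹ + (-1 : K)*a^2*b^2*(a-b)⁻¹ + (1 : K)*a^2*b^3*(a-b)⁻¹ + (-1 : K)*a^3*b^3*(a-b)⁻¹ + (1 : K)*a^3*b^4*(a-b)⁻¹ + (1 : K)*a^4*b^2*(a-b)⁻¹ + (-1 : K)*a^4*b^3*(a-b)⁻¹) * h3 + ((-1 : K)*a*b^2 + (1 : K)*a*b^3 + (1 : K)*a^2*b*(1-b)⁻¹ + (-1 : K)*a^2*b^2*(1-b)⁻¹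 + (-1 : K)*a^2*b^3*(1-b)⁻¹ + (1 : K)*a^2*b^4*(1-b)⁻¹ + (-1 : K)*a^3*b*(1-b)⁻¹ + (1 : K)*a^3*b^2 + (1 : K)*a^3*b^2*(1-b)⁻¹ + (-1 : K)*a^3*b^3 + (1 : K)*a^3*b^3*(1-b)⁻¹ + (-1 : K)*a^3*b^4*(1-b)⁻¹) * h4 + ((1 : K)*a^2*b + (-1 : K)*a^2*b^3 + (-1 : K)*a^3*b + (1 : K)*a^3*b^3) * h5

instance : CharZero RatFunc2 :=
  charZero_of_injective_algebraMap
    (IsFractionRing.injective (MvPolynomial (Fin 2) ℚ) RatFunc2)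

theorem hinj : Function.Injective (algebraMap (MvPolynomial (Fin 2) ℚ) RatFunc2) :=
  IsFractionRing.injective _ _

theorem qv1_ne_zero : qv1 ≠ 0 := by
  intro h
  apply MvPolynomial.X_ne_zero (R := ℚ) (0 : Fin 2)
  apply hinj
  rw [map_zero]
  exact h

theorem qv2_ne_zero : qv2 ≠ 0 := by
  intro h
  apply MvPolynomial.X_ne_zero (R := ℚ) (1 : Fin 2)
  apply hinj
  rw [map_zero]
  exact h

theorem qv1_pow_ne_one {n : ℕ} (hn : n ≠ 0) : qv1 ^ n ≠ 1 := by
  intro h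
  have h2 : MvPolynomial.X (0 : Fin 2) ^ n = (1 : MvPolynomial (Fin 2) ℚ) := by
    apply hinj; rw [map_pow, map_one]; exact h
  have := congrArg (MvPolynomial.eval (fun _ => (2 : ℚ))) h2
  simp only [map_pow, MvPolynomial.eval_X, map_one] at this
  have h3 : (1 : ℚ) < 2 ^ n := one_lt_pow₀ (by norm_num) hn
  rw [this] at h3; exact lt_irrefl _ h3

theorem qv2_pow_ne_one {n : ℕ} (hn : n ≠ 0) : qv2 ^ n ≠ 1 := by
  intro h
  have h2 : MvPolynomial.X (1 : Fin 2) ^ n = (1 : MvPolynomial (Fin 2) ℚ) := by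
    apply hinj; rw [map_pow, map_one]; exact h
  have := congrArg (MvPolynomial.eval (fun _ => (2 : ℚ))) h2
  simp only [map_pow, MvPolynomial.eval_X, map_one] at this
  have h3 : (1 : ℚ) < 2 ^ n := one_lt_pow₀ (by norm_num) hn
  rw [this] at h3; exact lt_irrefl _ h3

theorem qv_pow_ne {n : ℕ} (hn : n ≠ 0) : qv1 ^ n ≠ qv2 ^ n := by
  intro h
  have h2 : (MvPolynomial.X (0 : Fin 2) : MvPolynomial (Fin 2) ℚ) ^ n = MvPolynomial.X (1 : Fin 2) ^ n := by
    apply hinj; rw [map_pow, map_pow]; exact h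
  have := congrArg (MvPolynomial.eval (fun i : Fin 2 => if i = 0 then (2 : ℚ) else 3)) h2
  simp only [map_pow, MvPolynomial.eval_X] at this
  norm_num at this
  have h3 : (2 : ℚ) ^ n < 3 ^ n := pow_lt_pow_left₀ (by norm_num) (by norm_num) hn
  rw [this] at h3; exact lt_irrefl _ h3

/-- The sum of logarithmic-derivative series on both sides agree. -/
theorem Gsum :
    rescale (qv1⁻¹ ^ 2) (G qv1 (qv2 * qv1⁻¹)) + rescale (qv2⁻¹ ^ 2) (G (qv1 * qv2⁻¹) qv2)
      + Gm (qv1⁻¹ * qv2⁻¹) =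
    G qv1 (qv2 * qv1⁻¹) + G (qv1 * qv2⁻¹) qv2 := by
  ext n
  simp only [map_add, coeff_rescale, G, Gm, coeff_mk]
  cases n with
  | zero => simp
  | succ n =>
    simp only [Nat.succ_ne_zero, if_neg, if_false]
    set m := n + 1 with hm
    have hm0 : m ≠ 0 := Nat.succ_ne_zero n
    have ra : ((qv1⁻¹ ^ 2) ^ m : RatFunc2) = (qv1 ^ m)⁻¹ ^ 2 := by
      rw [← pow_mul, ← inv_pow, ← pow_mul, mul_comm]
    have rb : ((qv2⁻¹ ^ 2) ^ m : RatFunc2) = (qv2 ^ m)⁻¹ ^ 2 := by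
      rw [← pow_mul, ← inv_pow, ← pow_mul, mul_comm]
    have rba : ((qv2 * qv1⁻¹) ^ m : RatFunc2) = qv2 ^ m * (qv1 ^ m)⁻¹ := by
      rw [mul_pow, inv_pow]
    have rab : ((qv1 * qv2⁻¹) ^ m : RatFunc2) = qv1 ^ m * (qv2 ^ m)⁻¹ := by
      rw [mul_pow, inv_pow]
    have ru : ((qv1⁻¹ * qv2⁻¹) ^ m : RatFunc2) = (qv1 ^ m)⁻¹ * (qv2 ^ m)⁻¹ := by
      rw [mul_pow, inv_pow, inv_pow]
    rw [ra, rb, rba, rab, ru]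
    exact field_id (pow_ne_zero _ qv1_ne_zero) (pow_ne_zero _ qv2_ne_zero)
      (sub_ne_zero.mpr (Ne.symm (qv1_pow_ne_one hm0)))
      (sub_ne_zero.mpr (Ne.symm (qv2_pow_ne_one hm0)))
      (sub_ne_zero.mpr (qv_pow_ne hm0))

theorem constCoeff_dPoch (p q : K) : constantCoeff (dPoch p q) = 1 := by
  have : constantCoeff (dPoch p q) = dPochCoeff p q 0 := by
    rw [dPoch, ← coeff_zero_eq_constantCoeff, coeff_mk]
  rw [this, dPochCoeff]

end DPochAux

open PowerSeries DPochAux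

theorem dPoch_double_shift_identity :
    (PowerSeries.rescale (qv1⁻¹ ^ 2) (dPoch qv1 (qv2 * qv1⁻¹)) *
        PowerSeries.rescale (qv2⁻¹ ^ 2) (dPoch (qv1 * qv2⁻¹) qv2)) *
      (1 - PowerSeries.C (R := RatFunc2) (qv1⁻¹ * qv2⁻¹) * PowerSeries.X) =
      dPoch qv1 (qv2 * qv1⁻¹) * dPoch (qv1 * qv2⁻¹) qv2 := by
  set K := RatFunc2
  set F1 := dPoch qv1 (qv2 * qv1⁻¹) with hF1
  set F2 := dPoch (qv1 * qv2⁻¹) qv2 with hF2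
  set A := rescale (qv1⁻¹ ^ 2) F1 with hA
  set B := rescale (qv2⁻¹ ^ 2) F2 with hB
  set Mz := (1 - PowerSeries.C (qv1⁻¹ * qv2⁻¹) * X) with hMz
  apply ext_of_logDeriv
  · have c1 : constantCoeff F1 = 1 := constCoeff_dPoch _ _
    have c2 : constantCoeff F2 = 1 := constCoeff_dPoch _ _
    have cA : constantCoeff A = 1 := by
      rw [hA, ← coeff_zero_eq_constantCoeff, coeff_rescale, pow_zero, one_mul,
        coeff_zero_eq_constantCoeff, c1]
    have cB : constantCoeff B = 1 := by
      rw [hB, ← coeff_zero_eq_constantCoeff, coeff_rescale, pow_zero, one_mul,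
        coeff_zero_eq_constantCoeff, c2]
    have cM : constantCoeff Mz = 1 := by simp [hMz]
    rw [map_mul, map_mul, map_mul, c1, c2, cA, cB, cM]
    norm_num
  · rw [map_mul, constCoeff_dPoch, constCoeff_dPoch, mul_one]
    exact one_ne_zero
  · have hX : (X : K⟦X⟧) ≠ 0 := X_ne_zero
    apply mul_left_cancel₀ hX
    have k1 : X * d⁄dX K F1 = F1 * G qv1 (qv2 * qv1⁻¹) := key _ _
    have k2 : X * d⁄dX K F2 = F2 * G (qv1 * qv2⁻¹) qv2 := key _ _
    have kA : X * d⁄dX K A = A * rescale (qv1⁻¹ ^ 2) (G qv1 (qv2 * qv1⁻¹)) := by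
      rw [hA, rescale_logD, k1, map_mul]
    have kB : X * d⁄dX K B = B * rescale (qv2⁻¹ ^ 2) (G (qv1 * qv2⁻¹) qv2) := by
      rw [hB, rescale_logD, k2, map_mul]
    have kM : X * d⁄dX K Mz = Mz * Gm (qv1⁻¹ * qv2⁻¹) := key_linear _
    have kL : X * d⁄dX K ((A * B) * Mz) = (A * B) * Mz *
        ((rescale (qv1⁻¹ ^ 2) (G qv1 (qv2 * qv1⁻¹)) + rescale (qv2⁻¹ ^ 2) (G (qv1 * qv2⁻¹) qv2))
          + Gm (qv1⁻¹ * qv2⁻¹)) :=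
      mul_logD (mul_logD kA kB) kM
    have kR : X * d⁄dX K (F1 * F2) = F1 * F2 *
        (G qv1 (qv2 * qv1⁻¹) + G (qv1 * qv2⁻¹) qv2) :=
      mul_logD k1 k2
    calc X * (d⁄dX K (A * B * Mz) * (F1 * F2))
        = (X * d⁄dX K (A * B * Mz)) * (F1 * F2) := by ring
      _ = (A * B * Mz) * (F1 * F2) *
            ((rescale (qv1⁻¹ ^ 2) (G qv1 (qv2 * qv1⁻¹)) +
              rescale (qv2⁻¹ ^ 2) (G (qv1 * qv2⁻¹) qv2)) + Gm (qv1⁻¹ * qv2⁻¹)) := by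
          rw [kL]; ring
      _ = (A * B * Mz) * (F1 * F2) *
            (G qv1 (qv2 * qv1⁻¹) + G (qv1 * qv2⁻¹) qv2) := by
          rw [add_assoc, ← add_assoc, Gsum]  -- fix below if needed
      _ = (X * d⁄dX K (F1 * F2)) * (A * B * Mz) := by rw [kR]; ring
      _ = X * (d⁄dX K (F1 * F2) * (A * B * Mz)) := by ring
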